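/- Let t₁ < t₂ be reals and V : [t₁,t₂] × [0,1] → ℝ be continuous. Let u : [t₁,t₂] × [0,1] → ℂ be continuous, once continuously differentiable in t and twice continuously differentiable in x, satisfying the Dirichlet conditions u(t,0) = u(t,1) = 0 for all t and the Schrödinger equation i·∂_t u(t,x) = −∂²ₓₓ u(t,x) + V(t,x)·u(t,x) on [t₁,t₂] × [0,1]. Let ψ : [t₁,t₂] × [0,1] → ℂ have the same regularity, satisfy ψ(t,0) = ψ(t,1) = 0 for all t, and satisfy V(t,x)·ψ(t,x) = 0 for all (t,x) (ψ vanishes on the support of the potential). Suppose K₁, K₂, K₃ ≥ 0 are such that for all t ∈ [t₁,t₂]: (∫₀¹|∂²ₓₓψ(t,x)|²dx)^{1/2} ≤ K₁, (∫₀¹|∂_tψ(t,x)|²dx)^{1/2} ≤ K₂, and (∫₀¹|ψ(t,x)|²dx)^{1/2} ≤ K₃. Set A = (∫₀¹|u(t₁,x)|²dx)^{1/2}. Then for all t ∈ [t₁,t₂]: ∫₀¹ |u(t,x) − ψ(t,x)|² dx ≤ ∫₀¹ |u(t₁,x) − ψ(t₁,x)|² dx + 2·( A·K₁ + (K₃ +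 A)·K₂ )·(t − t₁). -/

import Mathlib

open MeasureTheory intervalIntegral Set Metric


-- section continuity
lemma QA.sect {E : Type*} [TopologicalSpace E] {t₁ t₂ : ℝ} (F : ℝ → ℝ → E)
    (hF : ContinuousOn (fun p : ℝ × ℝ => F p.1 p.2) (Set.Icc t₁ t₂ ×ˢ Set.Icc (0:ℝ) 1))
    {t : ℝ} (ht : t ∈ Set.Icc t₁ t₂) : ContinuousOn (F t) (Set.Icc (0:ℝ) 1) := by
  have : ContinuousOn (fun x : ℝ => (t, x)) (Set.Icc (0:ℝ) 1) :=
    (continuous_const.prodMk continuous_id).continuousOn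
  exact hF.comp this (fun x hx => ⟨ht, hx⟩)

lemma QA.sect_t {E : Type*} [TopologicalSpace E] {t₁ t₂ : ℝ} (F : ℝ → ℝ → E)
    (hF : ContinuousOn (fun p : ℝ × ℝ => F p.1 p.2) (Set.Icc t₁ t₂ ×ˢ Set.Icc (0:ℝ) 1))
    {x : ℝ} (hx : x ∈ Set.Icc (0:ℝ) 1) : ContinuousOn (fun t => F t x) (Set.Icc t₁ t₂) := by
  have : ContinuousOn (fun t : ℝ => (t, x)) (Set.Icc t₁ t₂) :=
    (continuous_id.prodMk continuous_const).continuousOn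
  exact hF.comp this (fun t htt => ⟨htt, hx⟩)

lemma QA.bound {t₁ t₂ : ℝ} (F : ℝ → ℝ → ℂ)
    (hF : ContinuousOn (fun p : ℝ × ℝ => F p.1 p.2) (Set.Icc t₁ t₂ ×ˢ Set.Icc (0:ℝ) 1)) :
    ∃ C : ℝ, 0 ≤ C ∧ ∀ t ∈ Set.Icc t₁ t₂, ∀ x ∈ Set.Icc (0:ℝ) 1, ‖F t x‖ ≤ C := by
  obtain ⟨C, hC⟩ := ((isCompact_Icc (a := t₁) (b := t₂)).prod
    (isCompact_Icc (a := (0:ℝ)) (b := 1))).exists_bound_of_continuousOn hF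
  refine ⟨max C 0, le_max_right _ _, fun t ht x hx => ?_⟩
  exact le_trans (hC (t, x) ⟨ht, hx⟩) (le_max_left _ _)

lemma QA.intInt {f : ℝ → ℂ} (hf : ContinuousOn f (Set.Icc (0:ℝ) 1)) :
    IntervalIntegrable f MeasureTheory.volume 0 1 := by
  apply ContinuousOn.intervalIntegrable
  rwa [Set.uIcc_of_le (by norm_num : (0:ℝ) ≤ 1)]

lemma QA.intIntR {f : ℝ → ℝ} (hf : ContinuousOn f (Set.Icc (0:ℝ) 1)) :
    IntervalIntegrable f MeasureTheory.volume 0 1 := by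
  apply ContinuousOn.intervalIntegrable
  rwa [Set.uIcc_of_le (by norm_num : (0:ℝ) ≤ 1)]

lemma QA.aesm {E : Type*} [NormedAddCommGroup E] {f : ℝ → E}
    (hf : ContinuousOn f (Set.Icc (0:ℝ) 1)) :
    MeasureTheory.AEStronglyMeasurable f (MeasureTheory.volume.restrict (Set.uIoc (0:ℝ) 1)) := by
  rw [Set.uIoc_of_le (by norm_num : (0:ℝ) ≤ 1)]
  exact (hf.mono Set.Ioc_subset_Icc_self).aestronglyMeasurable measurableSet_Ioc

lemma QA.re_integral {f : ℝ → ℂ} (hf : IntervalIntegrable f MeasureTheory.volume 0 1) :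
    ∫ x in (0:ℝ)..1, (f x).re = (∫ x in (0:ℝ)..1, f x).re :=
  Complex.reCLM.intervalIntegral_comp_comm hf

lemma QA.im_integral {f : ℝ → ℂ} (hf : IntervalIntegrable f MeasureTheory.volume 0 1) :
    ∫ x in (0:ℝ)..1, (f x).im = (∫ x in (0:ℝ)..1, f x).im :=
  Complex.imCLM.intervalIntegral_comp_comm hf
lemma QA.cs {f g : ℝ → ℝ} (hf : ContinuousOn f (Set.Icc (0:ℝ) 1))
    (hg : ContinuousOn g (Set.Icc (0:ℝ) 1)) :
    ∫ x in (0:ℝ)..1, |f x| * |g x| ≤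
      Real.sqrt (∫ x in (0:ℝ)..1, f x ^ 2) * Real.sqrt (∫ x in (0:ℝ)..1, g x ^ 2) := by
  set μ := MeasureTheory.volume.restrict (Set.Ioc (0:ℝ) 1) with hμ
  haveI : IsFiniteMeasure μ := by
    constructor
    rw [hμ, Measure.restrict_apply_univ, Real.volume_Ioc]
    norm_num
  have hfm : AEStronglyMeasurable f μ :=
    (hf.mono Set.Ioc_subset_Icc_self).aestronglyMeasurable measurableSet_Ioc
  have hgm : AEStronglyMeasurable g μ :=
    (hg.mono Set.Ioc_subset_Icc_self).aestronglyMeasurable measurableSet_Ioc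
  obtain ⟨Cf, hCf⟩ := (isCompact_Icc (a := (0:ℝ)) (b := 1)).exists_bound_of_continuousOn hf
  obtain ⟨Cg, hCg⟩ := (isCompact_Icc (a := (0:ℝ)) (b := 1)).exists_bound_of_continuousOn hg
  have hfl : MemLp (fun x => |f x|) (ENNReal.ofReal 2) μ := by
    refine MemLp.of_bound hfm.norm Cf ?_
    rw [hμ, ae_restrict_iff' measurableSet_Ioc]
    exact ae_of_all _ fun x hx => by
      simpa [abs_abs] using hCf x (Set.Ioc_subset_Icc_self hx)
  have hgl : MemLp (fun x => |g x|) (ENNReal.ofReal 2) μ := by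
    refine MemLp.of_bound hgm.norm Cg ?_
    rw [hμ, ae_restrict_iff' measurableSet_Ioc]
    exact ae_of_all _ fun x hx => by
      simpa [abs_abs] using hCg x (Set.Ioc_subset_Icc_self hx)
  have key := MeasureTheory.integral_mul_le_Lp_mul_Lq_of_nonneg
    (⟨by norm_num, by norm_num, by norm_num⟩ : Real.HolderConjugate 2 2) (μ := μ)
    (ae_of_all _ fun x => abs_nonneg (f x)) (ae_of_all _ fun x => abs_nonneg (g x)) hfl hgl
  have e1 : ∫ x in (0:ℝ)..1, |f x| * |g x| = ∫ x, |f x| * |g x| ∂μ := by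
    rw [intervalIntegral.integral_of_le (by norm_num : (0:ℝ) ≤ 1)]
  rw [e1]
  have e2 : ∫ x, |f x| ^ (2:ℝ) ∂μ = ∫ x in (0:ℝ)..1, f x ^ 2 := by
    rw [intervalIntegral.integral_of_le (by norm_num : (0:ℝ) ≤ 1)]
    apply MeasureTheory.integral_congr_ae; apply ae_of_all
    intro x
    show |f x| ^ (2:ℝ) = f x ^ 2
    rw [show (2:ℝ) = ((2:ℕ):ℝ) by norm_num, Real.rpow_natCast, sq_abs]
  have e3 : ∫ x, |g x| ^ (2:ℝ) ∂μ = ∫ x in (0:ℝ)..1, g x ^ 2 := by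
    rw [intervalIntegral.integral_of_le (by norm_num : (0:ℝ) ≤ 1)]
    apply MeasureTheory.integral_congr_ae; apply ae_of_all
    intro x
    show |g x| ^ (2:ℝ) = g x ^ 2
    rw [show (2:ℝ) = ((2:ℕ):ℝ) by norm_num, Real.rpow_natCast, sq_abs]
  calc ∫ x, |f x| * |g x| ∂μ
      ≤ (∫ x, |f x| ^ (2:ℝ) ∂μ) ^ ((1:ℝ)/2) * (∫ x, |g x| ^ (2:ℝ) ∂μ) ^ ((1:ℝ)/2) := key
    _ = Real.sqrt (∫ x in (0:ℝ)..1, f x ^ 2) * Real.sqrt (∫ x in (0:ℝ)..1, g x ^ 2) := by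
        rw [e2, e3, Real.sqrt_eq_rpow, Real.sqrt_eq_rpow]
lemma QA.nb {f g : ℝ → ℂ} (hf : ContinuousOn f (Set.Icc (0:ℝ) 1))
    (hg : ContinuousOn g (Set.Icc (0:ℝ) 1)) :
    ‖∫ x in (0:ℝ)..1, (starRingEnd ℂ) (f x) * g x‖ ≤
      Real.sqrt (∫ x in (0:ℝ)..1, ‖f x‖ ^ 2) * Real.sqrt (∫ x in (0:ℝ)..1, ‖g x‖ ^ 2) := by
  have h2 : ‖∫ x in (0:ℝ)..1, (starRingEnd ℂ) (f x) * g x‖ ≤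
      ∫ x in (0:ℝ)..1, ‖(starRingEnd ℂ) (f x) * g x‖ :=
    intervalIntegral.norm_integral_le_integral_norm (by norm_num)
  have h3 : ∫ x in (0:ℝ)..1, ‖(starRingEnd ℂ) (f x) * g x‖ =
      ∫ x in (0:ℝ)..1, |‖f x‖| * |‖g x‖| := by
    apply intervalIntegral.integral_congr
    intro x _
    simp [abs_of_nonneg (norm_nonneg _)]
  calc ‖∫ x in (0:ℝ)..1, (starRingEnd ℂ) (f x) * g x‖
      ≤ ∫ x in (0:ℝ)..1, |‖f x‖| * |‖g x‖| := by rw [← h3]; exact h2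
    _ ≤ _ := QA.cs hf.norm hg.norm

lemma QA.re_le (z : ℂ) : |z.re| ≤ ‖z‖ := by
  exact Complex.abs_re_le_norm z

lemma QA.im_conj_mul_self (z : ℂ) : ((starRingEnd ℂ) z * z).im = 0 := by
  simp [Complex.mul_im]
  ring

lemma QA.re_I_mul_real_mul (v : ℝ) (z : ℂ) :
    (Complex.I * (v:ℂ) * ((starRingEnd ℂ) z * z)).re = 0 := by
  have h := QA.im_conj_mul_self z
  rw [Complex.mul_re, h]
  simp

lemma QA.ibp {f g f' g' : ℝ → ℂ}
    (hf : ∀ x ∈ Set.Icc (0:ℝ) 1, HasDerivAt f (f' x) x)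
    (hg : ∀ x ∈ Set.Icc (0:ℝ) 1, HasDerivAt g (g' x) x)
    (hf' : ContinuousOn f' (Set.Icc (0:ℝ) 1)) (hg' : ContinuousOn g' (Set.Icc (0:ℝ) 1))
    (hb1 : f 1 * g 1 = 0) (hb0 : f 0 * g 0 = 0) :
    ∫ x in (0:ℝ)..1, f x * g' x = - ∫ x in (0:ℝ)..1, f' x * g x := by
  have h01 : Set.uIcc (0:ℝ) 1 = Set.Icc (0:ℝ) 1 := Set.uIcc_of_le (by norm_num)
  rw [intervalIntegral.integral_mul_deriv_eq_deriv_mul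
    (fun x hx => hf x (by rwa [h01] at hx)) (fun x hx => hg x (by rwa [h01] at hx))
    (QA.intInt hf') (QA.intInt hg'), hb1, hb0]
  ring

lemma QA.hasDerivAt_normSq {w : ℝ → ℂ} {w' : ℂ} {t : ℝ} (h : HasDerivAt w w' t) :
    HasDerivAt (fun s => ‖w s‖ ^ 2) (2 * ((starRingEnd ℂ) (w t) * w').re) t := by
  have hre : HasDerivAt (fun s => (w s).re) w'.re t :=
    (Complex.reCLM.hasFDerivAt.comp_hasDerivAt t h)
  have him : HasDerivAt (fun s => (w s).im) w'.im t :=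
    (Complex.imCLM.hasFDerivAt.comp_hasDerivAt t h)
  have := (hre.mul hre).add (him.mul him)
  have heq : (fun s => (w s).re * (w s).re + (w s).im * (w s).im) = fun s => ‖w s‖ ^ 2 := by
    funext s
    rw [← Complex.normSq_apply, ← Complex.sq_norm]
  rw [show (((fun s => (w s).re) * fun s => (w s).re) + (fun s => (w s).im) * fun s => (w s).im) = fun s => ‖w s‖ ^ 2 from heq] at this
  refine this.congr_deriv ?_
  simp [Complex.mul_re, Complex.conj_re, Complex.conj_im]
  ring

/-- Derivative of `t ↦ ∫₀¹ ‖f t x‖²` at interior points. -/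
lemma QA.deriv_sq_integral {t₁ t₂ : ℝ} (f ft : ℝ → ℝ → ℂ)
    (hfc : ContinuousOn (fun p : ℝ × ℝ => f p.1 p.2) (Set.Icc t₁ t₂ ×ˢ Set.Icc (0:ℝ) 1))
    (hftc : ContinuousOn (fun p : ℝ × ℝ => ft p.1 p.2) (Set.Icc t₁ t₂ ×ˢ Set.Icc (0:ℝ) 1))
    (hf : ∀ t ∈ Set.Icc t₁ t₂, ∀ x ∈ Set.Icc (0:ℝ) 1, HasDerivAt (fun s => f s x) (ft t x) t)
    {t₀ : ℝ} (ht₀ : t₀ ∈ Set.Ioo t₁ t₂) :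
    HasDerivAt (fun t => ∫ x in (0:ℝ)..1, ‖f t x‖ ^ 2)
      (∫ x in (0:ℝ)..1, 2 * ((starRingEnd ℂ) (f t₀ x) * ft t₀ x).re) t₀ := by
  obtain ⟨ε, hε, hball⟩ := Metric.isOpen_iff.1 isOpen_Ioo t₀ ht₀
  have hsub : Metric.ball t₀ ε ⊆ Set.Icc t₁ t₂ := hball.trans Set.Ioo_subset_Icc_self
  obtain ⟨M₁, hM₁0, hM₁⟩ := QA.bound f hfc
  obtain ⟨M₂, hM₂0, hM₂⟩ := QA.bound ft hftc
  have ht₀' : t₀ ∈ Set.Icc t₁ t₂ := Set.Ioo_subset_Icc_self ht₀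
  refine (intervalIntegral.hasDerivAt_integral_of_dominated_loc_of_deriv_le
    (F := fun t x => ‖f t x‖ ^ 2)
    (F' := fun t x => 2 * ((starRingEnd ℂ) (f t x) * ft t x).re)
    (a := (0:ℝ)) (b := 1) (μ := MeasureTheory.volume) (x₀ := t₀)
    (bound := fun _ => 2 * M₁ * M₂) (Metric.ball_mem_nhds t₀ hε)
    ?_ ?_ ?_ ?_ ?_ ?_).2
  · -- measurability of F t for t near t₀
    filter_upwards [Metric.ball_mem_nhds t₀ hε] with t htb
    exact QA.aesm ((QA.sect f hfc (hsub htb)).norm.pow 2)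
  · apply ContinuousOn.intervalIntegrable
    rw [Set.uIcc_of_le (by norm_num : (0:ℝ) ≤ 1)]
    exact (QA.sect f hfc ht₀').norm.pow 2
  · refine QA.aesm (ContinuousOn.mul continuousOn_const ?_)
    exact Complex.continuous_re.comp_continuousOn
      (((QA.sect f hfc ht₀').star).mul (QA.sect ft hftc ht₀'))
  · apply ae_of_all
    intro x hx t htb
    have hx' : x ∈ Set.Icc (0:ℝ) 1 := by
      rw [Set.uIoc_of_le (by norm_num : (0:ℝ) ≤ 1)] at hx
      exact Set.Ioc_subset_Icc_self hx
    have ht' : t ∈ Set.Icc t₁ t₂ := hsub htb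
    have h1 : |((starRingEnd ℂ) (f t x) * ft t x).re| ≤ M₁ * M₂ := by
      refine (Complex.abs_re_le_norm _).trans ?_
      rw [norm_mul]
      simp only [Complex.norm_conj]
      exact mul_le_mul (hM₁ t ht' x hx') (hM₂ t ht' x hx') (norm_nonneg _) hM₁0
    show ‖2 * ((starRingEnd ℂ) (f t x) * ft t x).re‖ ≤ 2 * M₁ * M₂
    rw [norm_mul, Real.norm_eq_abs, Real.norm_eq_abs, abs_two]
    nlinarith [abs_nonneg (((starRingEnd ℂ) (f t x) * ft t x).re)]
  · exact QA.intIntR continuousOn_const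
  · apply ae_of_all
    intro x hx t htb
    have hx' : x ∈ Set.Icc (0:ℝ) 1 := by
      rw [Set.uIoc_of_le (by norm_num : (0:ℝ) ≤ 1)] at hx
      exact Set.Ioc_subset_Icc_self hx
    exact QA.hasDerivAt_normSq (hf t (hsub htb) x hx')


/-- Continuity of `t ↦ ∫₀¹ ‖f t x‖²` on `[t₁,t₂]`. -/
lemma QA.cont_sq_integral {t₁ t₂ : ℝ} (f : ℝ → ℝ → ℂ)
    (hfc : ContinuousOn (fun p : ℝ × ℝ => f p.1 p.2) (Set.Icc t₁ t₂ ×ˢ Set.Icc (0:ℝ) 1)) :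
    ContinuousOn (fun t => ∫ x in (0:ℝ)..1, ‖f t x‖ ^ 2) (Set.Icc t₁ t₂) := by
  obtain ⟨M₁, hM₁0, hM₁⟩ := QA.bound f hfc
  intro t₀ ht₀
  apply intervalIntegral.continuousWithinAt_of_dominated_interval
    (bound := fun _ => M₁ ^ 2)
  · filter_upwards [self_mem_nhdsWithin] with t htb
    exact QA.aesm ((QA.sect f hfc htb).norm.pow 2)
  · filter_upwards [self_mem_nhdsWithin] with t htb
    apply ae_of_all
    intro x hx
    have hx' : x ∈ Set.Icc (0:ℝ) 1 := by
      rw [Set.uIoc_of_le (by norm_num : (0:ℝ) ≤ 1)] at hx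
      exact Set.Ioc_subset_Icc_self hx
    have := hM₁ t htb x hx'
    rw [Real.norm_eq_abs, abs_of_nonneg (by positivity : (0:ℝ) ≤ ‖f t x‖ ^ 2)]
    exact pow_le_pow_left₀ (norm_nonneg _) this 2
  · exact QA.intIntR continuousOn_const
  · apply ae_of_all
    intro x hx
    have hx' : x ∈ Set.Icc (0:ℝ) 1 := by
      rw [Set.uIoc_of_le (by norm_num : (0:ℝ) ≤ 1)] at hx
      exact Set.Ioc_subset_Icc_self hx
    exact (((QA.sect_t f hfc hx').norm.pow 2) t₀ ht₀)
lemma QA.mvt {t₁ t₂ C : ℝ} {E D : ℝ → ℝ} (hE : ContinuousOn E (Set.Icc t₁ t₂))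
    (hD : ∀ t ∈ Set.Ioo t₁ t₂, HasDerivAt E (D t) t)
    (hDC : ∀ t ∈ Set.Ioo t₁ t₂, D t ≤ C) :
    ∀ t ∈ Set.Icc t₁ t₂, E t ≤ E t₁ + C * (t - t₁) := by
  intro t htm
  set g : ℝ → ℝ := fun s => C * s - E s with hg
  have hgC : ContinuousOn g (Set.Icc t₁ t₂) :=
    (continuous_const.mul continuous_id).continuousOn.sub hE
  have hgd : ∀ s ∈ Set.Ioo t₁ t₂, HasDerivAt g (C - D s) s := by
    intro s hs
    have := ((hasDerivAt_id s).const_mul C).sub (hD s hs)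
    simp only [mul_one] at this
    exact this
  have hmono : MonotoneOn g (Set.Icc t₁ t₂) := by
    apply monotoneOn_of_deriv_nonneg (convex_Icc t₁ t₂) hgC
    · intro s hs
      rw [interior_Icc] at hs
      exact ((hgd s hs).differentiableAt).differentiableWithinAt
    · intro s hs
      rw [interior_Icc] at hs
      rw [(hgd s hs).deriv]
      linarith [hDC s hs]
  have ht1 : t₁ ∈ Set.Icc t₁ t₂ := ⟨le_refl _, le_trans htm.1 htm.2⟩
  have := hmono ht1 htm htm.1
  simp only [hg] at this
  linarith

lemma QA.const_of_deriv_zero {t₁ t₂ : ℝ} {E D : ℝ → ℝ} (hE : ContinuousOn E (Set.Icc t₁ t₂))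
    (hD : ∀ t ∈ Set.Ioo t₁ t₂, HasDerivAt E (D t) t)
    (hDC : ∀ t ∈ Set.Ioo t₁ t₂, D t = 0) :
    ∀ t ∈ Set.Icc t₁ t₂, E t = E t₁ := by
  intro t htm
  have h1 := QA.mvt hE hD (fun t ht => le_of_eq (hDC t ht)) t htm
  have h2 := QA.mvt (C := 0) (D := fun s => -D s) hE.neg
    (fun s hs => (hD s hs).neg) (fun s hs => by simp [hDC s hs]) t htm
  simp only [Pi.neg_apply] at h2
  simp only [zero_mul] at h1 h2
  linarith




/-- Comparison lemma for the quasi-adiabatic wall motion: a solution `u` of the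
Schrödinger equation `i∂_t u = -∂²ₓₓ u + V u` on `[t₁,t₂] × [0,1]` with Dirichlet
boundary conditions stays close to any comparison function `ψ` that vanishes on the
support of the potential:
`‖u(t)-ψ(t)‖² ≤ ‖u(t₁)-ψ(t₁)‖² + 2(A K₁ + (K₃+A) K₂)(t-t₁)`. -/
theorem stmt_13
    (t₁ t₂ : ℝ) (ht : t₁ < t₂)
    (V : ℝ → ℝ → ℝ)
    (hVc : ContinuousOn (fun p : ℝ × ℝ => V p.1 p.2) (Set.Icc t₁ t₂ ×ˢ Set.Icc (0 : ℝ) 1))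
    -- the solution u and its partial derivatives
    (u ut ux uxx : ℝ → ℝ → ℂ)
    (huc : ContinuousOn (fun p : ℝ × ℝ => u p.1 p.2) (Set.Icc t₁ t₂ ×ˢ Set.Icc (0 : ℝ) 1))
    (hutc : ContinuousOn (fun p : ℝ × ℝ => ut p.1 p.2) (Set.Icc t₁ t₂ ×ˢ Set.Icc (0 : ℝ) 1))
    (huxxc : ContinuousOn (fun p : ℝ × ℝ => uxx p.1 p.2) (Set.Icc t₁ t₂ ×ˢ Set.Icc (0 : ℝ) 1))
    (hut : ∀ t ∈ Set.Icc t₁ t₂, ∀ x ∈ Set.Icc (0 : ℝ) 1,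
      HasDerivAt (fun s => u s x) (ut t x) t)
    (hux : ∀ t ∈ Set.Icc t₁ t₂, ∀ x ∈ Set.Icc (0 : ℝ) 1,
      HasDerivAt (fun y => u t y) (ux t x) x)
    (huxx : ∀ t ∈ Set.Icc t₁ t₂, ∀ x ∈ Set.Icc (0 : ℝ) 1,
      HasDerivAt (fun y => ux t y) (uxx t x) x)
    (hubc : ∀ t ∈ Set.Icc t₁ t₂, u t 0 = 0 ∧ u t 1 = 0)
    (hupde : ∀ t ∈ Set.Icc t₁ t₂, ∀ x ∈ Set.Icc (0 : ℝ) 1,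
      Complex.I * ut t x = -uxx t x + (V t x : ℂ) * u t x)
    -- the comparison function ψ and its partial derivatives
    (ψ ψt ψx ψxx : ℝ → ℝ → ℂ)
    (hψc : ContinuousOn (fun p : ℝ × ℝ => ψ p.1 p.2) (Set.Icc t₁ t₂ ×ˢ Set.Icc (0 : ℝ) 1))
    (hψtc : ContinuousOn (fun p : ℝ × ℝ => ψt p.1 p.2) (Set.Icc t₁ t₂ ×ˢ Set.Icc (0 : ℝ) 1))
    (hψxxc : ContinuousOn (fun p : ℝ × ℝ => ψxx p.1 p.2) (Set.Icc t₁ t₂ ×ˢ Set.Icc (0 : ℝ) 1))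
    (hψt : ∀ t ∈ Set.Icc t₁ t₂, ∀ x ∈ Set.Icc (0 : ℝ) 1,
      HasDerivAt (fun s => ψ s x) (ψt t x) t)
    (hψx : ∀ t ∈ Set.Icc t₁ t₂, ∀ x ∈ Set.Icc (0 : ℝ) 1,
      HasDerivAt (fun y => ψ t y) (ψx t x) x)
    (hψxx : ∀ t ∈ Set.Icc t₁ t₂, ∀ x ∈ Set.Icc (0 : ℝ) 1,
      HasDerivAt (fun y => ψx t y) (ψxx t x) x)
    (hψbc : ∀ t ∈ Set.Icc t₁ t₂, ψ t 0 = 0 ∧ ψ t 1 = 0)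
    (hψV : ∀ t ∈ Set.Icc t₁ t₂, ∀ x ∈ Set.Icc (0 : ℝ) 1, (V t x : ℂ) * ψ t x = 0)
    -- the bounds
    (K₁ K₂ K₃ : ℝ) (hK₁0 : 0 ≤ K₁) (hK₂0 : 0 ≤ K₂) (hK₃0 : 0 ≤ K₃)
    (hK₁ : ∀ t ∈ Set.Icc t₁ t₂,
      Real.sqrt (∫ x in (0 : ℝ)..1, ‖ψxx t x‖ ^ 2) ≤ K₁)
    (hK₂ : ∀ t ∈ Set.Icc t₁ t₂,
      Real.sqrt (∫ x in (0 : ℝ)..1, ‖ψt t x‖ ^ 2) ≤ K₂)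
    (hK₃ : ∀ t ∈ Set.Icc t₁ t₂,
      Real.sqrt (∫ x in (0 : ℝ)..1, ‖ψ t x‖ ^ 2) ≤ K₃)
    (A : ℝ) (hA : A = Real.sqrt (∫ x in (0 : ℝ)..1, ‖u t₁ x‖ ^ 2)) :
    ∀ t ∈ Set.Icc t₁ t₂,
      (∫ x in (0 : ℝ)..1, ‖u t x - ψ t x‖ ^ 2) ≤
        (∫ x in (0 : ℝ)..1, ‖u t₁ x - ψ t₁ x‖ ^ 2) +
          2 * (A * K₁ + (K₃ + A) * K₂) * (t - t₁) := by
  have h01 : Set.uIcc (0:ℝ) 1 = Set.Icc (0:ℝ) 1 := Set.uIcc_of_le (by norm_num)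
  -- continuity of various sections
  have cux : ∀ t ∈ Set.Icc t₁ t₂, ContinuousOn (ux t) (Set.Icc (0:ℝ) 1) := fun t htt x hx =>
    ((huxx t htt x hx).continuousAt).continuousWithinAt
  have cψx : ∀ t ∈ Set.Icc t₁ t₂, ContinuousOn (ψx t) (Set.Icc (0:ℝ) 1) := fun t htt x hx =>
    ((hψxx t htt x hx).continuousAt).continuousWithinAt
  have ccu : ∀ t ∈ Set.Icc t₁ t₂,
      ContinuousOn (fun x => (starRingEnd ℂ) (u t x)) (Set.Icc (0:ℝ) 1) := fun t htt => by
    simp only [starRingEnd_apply]; exact (QA.sect u huc htt).star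
  have ccψ : ∀ t ∈ Set.Icc t₁ t₂,
      ContinuousOn (fun x => (starRingEnd ℂ) (ψ t x)) (Set.Icc (0:ℝ) 1) := fun t htt => by
    simp only [starRingEnd_apply]; exact (QA.sect ψ hψc htt).star
  have ccux : ∀ t ∈ Set.Icc t₁ t₂,
      ContinuousOn (fun x => (starRingEnd ℂ) (ux t x)) (Set.Icc (0:ℝ) 1) := fun t htt => by
    simp only [starRingEnd_apply]; exact (cux t htt).star
  have ccψx : ∀ t ∈ Set.Icc t₁ t₂,
      ContinuousOn (fun x => (starRingEnd ℂ) (ψx t x)) (Set.Icc (0:ℝ) 1) := fun t htt => by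
    simp only [starRingEnd_apply]; exact (cψx t htt).star
  have ccψxx : ∀ t ∈ Set.Icc t₁ t₂,
      ContinuousOn (fun x => (starRingEnd ℂ) (ψxx t x)) (Set.Icc (0:ℝ) 1) := fun t htt => by
    simp only [starRingEnd_apply]; exact (QA.sect ψxx hψxxc htt).star
  have cV : ∀ t ∈ Set.Icc t₁ t₂,
      ContinuousOn (fun x => ((V t x : ℂ))) (Set.Icc (0:ℝ) 1) := fun t htt =>
    Complex.continuous_ofReal.comp_continuousOn (QA.sect V hVc htt)
  -- PDE solved for u_t
  have hute : ∀ t ∈ Set.Icc t₁ t₂, ∀ x ∈ Set.Icc (0:ℝ) 1,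
      ut t x = Complex.I * uxx t x - Complex.I * (V t x : ℂ) * u t x := by
    intro t htt x hx
    have h := hupde t htt x hx
    have h2 : -Complex.I * (Complex.I * ut t x)
        = -Complex.I * (-uxx t x + (V t x:ℂ) * u t x) := by rw [h]
    calc ut t x = -Complex.I * (Complex.I * ut t x) := by
          rw [← mul_assoc, neg_mul, Complex.I_mul_I, neg_neg, one_mul]
      _ = -Complex.I * (-uxx t x + (V t x:ℂ) * u t x) := h2
      _ = _ := by ring
  -- integration by parts identities
  have hIBPu : ∀ t ∈ Set.Icc t₁ t₂,
      (∫ x in (0:ℝ)..1, (starRingEnd ℂ) (u t x) * uxx t x)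
        = - ∫ x in (0:ℝ)..1, (starRingEnd ℂ) (ux t x) * ux t x := by
    intro t htt
    refine QA.ibp (f' := fun x => (starRingEnd ℂ) (ux t x)) ?_ (huxx t htt) (ccux t htt)
      (QA.sect uxx huxxc htt) ?_ ?_
    · intro x hx
      simpa only [← starRingEnd_apply] using (hux t htt x hx).star
    · rw [(hubc t htt).2]; simp
    · rw [(hubc t htt).1]; simp
  have hIBPψ : ∀ t ∈ Set.Icc t₁ t₂,
      (∫ x in (0:ℝ)..1, (starRingEnd ℂ) (ψ t x) * uxx t x)
        = ∫ x in (0:ℝ)..1, (starRingEnd ℂ) (ψxx t x) * u t x := by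
    intro t htt
    have h1 : (∫ x in (0:ℝ)..1, (starRingEnd ℂ) (ψ t x) * uxx t x)
        = - ∫ x in (0:ℝ)..1, (starRingEnd ℂ) (ψx t x) * ux t x := by
      refine QA.ibp (f' := fun x => (starRingEnd ℂ) (ψx t x)) ?_ (huxx t htt) (ccψx t htt)
        (QA.sect uxx huxxc htt) ?_ ?_
      · intro x hx
        simpa only [← starRingEnd_apply] using (hψx t htt x hx).star
      · rw [(hψbc t htt).2]; simp
      · rw [(hψbc t htt).1]; simp
    have h2 : (∫ x in (0:ℝ)..1, (starRingEnd ℂ) (ψx t x) * ux t x)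
        = - ∫ x in (0:ℝ)..1, (starRingEnd ℂ) (ψxx t x) * u t x := by
      refine QA.ibp (f' := fun x => (starRingEnd ℂ) (ψxx t x)) ?_ (hux t htt) (ccψxx t htt)
        (cux t htt) ?_ ?_
      · intro x hx
        simpa only [← starRingEnd_apply] using (hψxx t htt x hx).star
      · rw [(hubc t htt).2]; simp
      · rw [(hubc t htt).1]; simp
    rw [h1, h2, neg_neg]
  -- Re ∫ conj(u) * u_t = 0
  have hReuut : ∀ t ∈ Set.Icc t₁ t₂,
      (∫ x in (0:ℝ)..1, (starRingEnd ℂ) (u t x) * ut t x).re = 0 := by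
    intro t htt
    have i1 : IntervalIntegrable
        (fun x => Complex.I * ((starRingEnd ℂ) (u t x) * uxx t x)) volume 0 1 :=
      QA.intInt (continuousOn_const.mul ((ccu t htt).mul (QA.sect uxx huxxc htt)))
    have i2 : IntervalIntegrable
        (fun x => Complex.I * (V t x:ℂ) * ((starRingEnd ℂ) (u t x) * u t x)) volume 0 1 :=
      QA.intInt ((continuousOn_const.mul (cV t htt)).mul ((ccu t htt).mul (QA.sect u huc htt)))
    have hsplit : (∫ x in (0:ℝ)..1, (starRingEnd ℂ) (u t x) * ut t x)
        = Complex.I * (∫ x in (0:ℝ)..1, (starRingEnd ℂ) (u t x) * uxx t x)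
          - ∫ x in (0:ℝ)..1, Complex.I * (V t x:ℂ) * ((starRingEnd ℂ) (u t x) * u t x) := by
      rw [← intervalIntegral.integral_const_mul, ← intervalIntegral.integral_sub i1 i2]
      apply intervalIntegral.integral_congr
      intro x hx
      rw [h01] at hx
      beta_reduce
      rw [hute t htt x hx]
      ring
    have hQim : (∫ x in (0:ℝ)..1, (starRingEnd ℂ) (u t x) * uxx t x).im = 0 := by
      rw [hIBPu t htt, Complex.neg_im, ← QA.im_integral (f := fun x => (starRingEnd ℂ) (ux t x) * ux t x) (QA.intInt ((ccux t htt).mul (cux t htt)))]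
      rw [intervalIntegral.integral_congr (g := fun _ => (0:ℝ))
        (fun x _ => QA.im_conj_mul_self (ux t x))]
      simp
    have hRre : (∫ x in (0:ℝ)..1,
        Complex.I * (V t x:ℂ) * ((starRingEnd ℂ) (u t x) * u t x)).re = 0 := by
      rw [← QA.re_integral i2]
      rw [intervalIntegral.integral_congr (g := fun _ => (0:ℝ))
        (fun x _ => QA.re_I_mul_real_mul (V t x) (u t x))]
      simp
    rw [hsplit, Complex.sub_re, Complex.mul_re, Complex.I_re, Complex.I_im, hQim, hRre]
    ring
  -- conservation of the L² norm of u
  have hNconst : ∀ t ∈ Set.Icc t₁ t₂,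
      (∫ x in (0:ℝ)..1, ‖u t x‖ ^ 2) = ∫ x in (0:ℝ)..1, ‖u t₁ x‖ ^ 2 := by
    refine QA.const_of_deriv_zero
      (D := fun t => ∫ x in (0:ℝ)..1, 2 * ((starRingEnd ℂ) (u t x) * ut t x).re)
      (QA.cont_sq_integral u huc)
      (fun t htI => QA.deriv_sq_integral u ut huc hutc hut htI) ?_
    intro t htI
    have htt := Set.Ioo_subset_Icc_self htI
    beta_reduce
    rw [intervalIntegral.integral_const_mul,
      QA.re_integral (f := fun x => (starRingEnd ℂ) (u t x) * ut t x) (QA.intInt ((ccu t htt).mul (QA.sect ut hutc htt))), hReuut t htt]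
    ring
  have hA0 : 0 ≤ A := by rw [hA]; exact Real.sqrt_nonneg _
  have hAt : ∀ t ∈ Set.Icc t₁ t₂, Real.sqrt (∫ x in (0:ℝ)..1, ‖u t x‖ ^ 2) = A := by
    intro t htt
    rw [hNconst t htt, hA]
  -- the derivative bound
  set C : ℝ := 2 * (A * K₁ + (K₃ + A) * K₂) with hC
  have hDle : ∀ s ∈ Set.Ioo t₁ t₂,
      (∫ x in (0:ℝ)..1,
        2 * ((starRingEnd ℂ) (u s x - ψ s x) * (ut s x - ψt s x)).re) ≤ C := by
    intro s hsI
    have hs := Set.Ioo_subset_Icc_self hsI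
    have iuut : IntervalIntegrable (fun x => (starRingEnd ℂ) (u s x) * ut s x) volume 0 1 :=
      QA.intInt ((ccu s hs).mul (QA.sect ut hutc hs))
    have iψut : IntervalIntegrable (fun x => (starRingEnd ℂ) (ψ s x) * ut s x) volume 0 1 :=
      QA.intInt ((ccψ s hs).mul (QA.sect ut hutc hs))
    have iuψt : IntervalIntegrable (fun x => (starRingEnd ℂ) (u s x) * ψt s x) volume 0 1 :=
      QA.intInt ((ccu s hs).mul (QA.sect ψt hψtc hs))
    have iψψt : IntervalIntegrable (fun x => (starRingEnd ℂ) (ψ s x) * ψt s x) volume 0 1 :=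
      QA.intInt ((ccψ s hs).mul (QA.sect ψt hψtc hs))
    have iww : IntervalIntegrable
        (fun x => (starRingEnd ℂ) (u s x - ψ s x) * (ut s x - ψt s x)) volume 0 1 := by
      apply QA.intInt
      have : ContinuousOn (fun x => (starRingEnd ℂ) (u s x - ψ s x)) (Set.Icc (0:ℝ) 1) := by
        simp only [starRingEnd_apply]
        exact ((QA.sect u huc hs).sub (QA.sect ψ hψc hs)).star
      exact this.mul ((QA.sect ut hutc hs).sub (QA.sect ψt hψtc hs))
    -- split the integral into four pieces
    have hwsplit : (∫ x in (0:ℝ)..1, (starRingEnd ℂ) (u s x - ψ s x) * (ut s x - ψt s x))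
        = (∫ x in (0:ℝ)..1, (starRingEnd ℂ) (u s x) * ut s x)
          - (∫ x in (0:ℝ)..1, (starRingEnd ℂ) (ψ s x) * ut s x)
          - ((∫ x in (0:ℝ)..1, (starRingEnd ℂ) (u s x) * ψt s x)
            - (∫ x in (0:ℝ)..1, (starRingEnd ℂ) (ψ s x) * ψt s x)) := by
      rw [← intervalIntegral.integral_sub iuut iψut, ← intervalIntegral.integral_sub iuψt iψψt,
        ← intervalIntegral.integral_sub (iuut.sub iψut) (iuψt.sub iψψt)]
      apply intervalIntegral.integral_congr
      intro x hx
      beta_reduce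
      simp only [map_sub]
      ring
    -- the ψ-uxx term
    have hT2 : (∫ x in (0:ℝ)..1, (starRingEnd ℂ) (ψ s x) * ut s x)
        = Complex.I * ∫ x in (0:ℝ)..1, (starRingEnd ℂ) (ψxx s x) * u s x := by
      have e : (∫ x in (0:ℝ)..1, (starRingEnd ℂ) (ψ s x) * ut s x)
          = Complex.I * ∫ x in (0:ℝ)..1, (starRingEnd ℂ) (ψ s x) * uxx s x := by
        rw [← intervalIntegral.integral_const_mul]
        apply intervalIntegral.integral_congr
        intro x hx
        rw [h01] at hx
        beta_reduce
        have h0 : (V s x:ℂ) * (starRingEnd ℂ) (ψ s x) = 0 := by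
          have hv := hψV s hs x hx
          calc (V s x:ℂ) * (starRingEnd ℂ) (ψ s x)
              = (starRingEnd ℂ) ((V s x:ℂ) * ψ s x) := by
                rw [map_mul, Complex.conj_ofReal]
            _ = 0 := by rw [hv, map_zero]
        rw [hute s hs x hx]
        calc (starRingEnd ℂ) (ψ s x) * (Complex.I * uxx s x - Complex.I * (V s x:ℂ) * u s x)
            = Complex.I * ((starRingEnd ℂ) (ψ s x) * uxx s x)
              - Complex.I * (((V s x:ℂ) * (starRingEnd ℂ) (ψ s x)) * u s x) := by ring
          _ = Complex.I * ((starRingEnd ℂ) (ψ s x) * uxx s x) := by rw [h0]; ring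
      rw [e, hIBPψ s hs]
    -- bounds on the three error terms
    have hb2 : |(∫ x in (0:ℝ)..1, (starRingEnd ℂ) (ψ s x) * ut s x).re| ≤ K₁ * A := by
      rw [hT2]
      set Z := ∫ x in (0:ℝ)..1, (starRingEnd ℂ) (ψxx s x) * u s x with hZ
      calc |(Complex.I * Z).re| = |Z.im| := by
            rw [Complex.mul_re, Complex.I_re, Complex.I_im]
            simp
        _ ≤ ‖Z‖ := by exact Complex.abs_im_le_norm Z
        _ ≤ Real.sqrt (∫ x in (0:ℝ)..1, ‖ψxx s x‖ ^ 2)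
            * Real.sqrt (∫ x in (0:ℝ)..1, ‖u s x‖ ^ 2) :=
          QA.nb (QA.sect ψxx hψxxc hs) (QA.sect u huc hs)
        _ ≤ K₁ * A :=
          mul_le_mul (hK₁ s hs) (le_of_eq (hAt s hs)) (Real.sqrt_nonneg _) hK₁0
    have hb3 : |(∫ x in (0:ℝ)..1, (starRingEnd ℂ) (u s x) * ψt s x).re| ≤ A * K₂ := by
      refine (QA.re_le _).trans ((QA.nb (QA.sect u huc hs) (QA.sect ψt hψtc hs)).trans ?_)
      exact mul_le_mul (le_of_eq (hAt s hs)) (hK₂ s hs) (Real.sqrt_nonneg _) hA0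
    have hb4 : |(∫ x in (0:ℝ)..1, (starRingEnd ℂ) (ψ s x) * ψt s x).re| ≤ K₃ * K₂ := by
      refine (QA.re_le _).trans ((QA.nb (QA.sect ψ hψc hs) (QA.sect ψt hψtc hs)).trans ?_)
      exact mul_le_mul (hK₃ s hs) (hK₂ s hs) (Real.sqrt_nonneg _) hK₃0
    -- assemble
    rw [intervalIntegral.integral_const_mul, QA.re_integral iww, hwsplit]
    rw [Complex.sub_re, Complex.sub_re, Complex.sub_re, hReuut s hs]
    have h2 := abs_le.mp hb2
    have h3 := abs_le.mp hb3
    have h4 := abs_le.mp hb4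
    rw [hC]
    nlinarith [h2.1, h2.2, h3.1, h3.2, h4.1, h4.2]
  -- conclude by the mean value inequality
  have hfinal := QA.mvt
    (E := fun t => ∫ x in (0:ℝ)..1, ‖u t x - ψ t x‖ ^ 2)
    (D := fun s => ∫ x in (0:ℝ)..1,
      2 * ((starRingEnd ℂ) (u s x - ψ s x) * (ut s x - ψt s x)).re)
    (QA.cont_sq_integral (fun t x => u t x - ψ t x) (huc.sub hψc))
    (fun s hsI => QA.deriv_sq_integral (fun t x => u t x - ψ t x)
      (fun t x => ut t x - ψt t x) (huc.sub hψc) (hutc.sub hψtc)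
      (fun t htt x hx => (hut t htt x hx).sub (hψt t htt x hx)) hsI)
    hDle
  intro t htm
  have h := hfinal t htm
  beta_reduce at h
  rw [hC] at h
  rw [hC]
  exact h
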